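/- Let n ≥ 3 and a ≥ 2 be integers and let a₃,…,aₙ be integers with a_i > a for each 3 ≤ i ≤ n. The tangent cone at the origin of the Brieskorn variety X = {z ∈ ℂⁿ : z₁^a + z₂^a + Σ_{i=3}^n z_i^{a_i} = 0} equals {z ∈ ℂⁿ : z₁^a + z₂^a = 0}, i.e. the union of the a complex hyperplanes {z₁ = ξz₂} over the a-th roots ξ of −1. -/

import Mathlib

open Filter Topology

set_option maxHeartbeats 1000000

/-- The tangent cone at the origin of the Brieskorn variety
`X = {z₁^a + z₂^a + Σ_{i≥3} z_i^{a_i} = 0}` (with `a_i > a` for `i ≥ 3`) equals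
`{z : z₁^a + z₂^a = 0}`, the union of the `a` hyperplanes `{z₁ = ξz₂}` over the
`a`-th roots `ξ` of `−1`. -/
theorem stmt_13 (n a : ℕ) (hn : 3 ≤ n) (ha : 2 ≤ a)
    (e : Fin n → ℕ) (he0 : e ⟨0, by omega⟩ = a) (he1 : e ⟨1, by omega⟩ = a)
    (he : ∀ i : Fin n, 2 ≤ (i : ℕ) → a < e i) :
    tangentConeAt ℝ {z : EuclideanSpace ℂ (Fin n) | ∑ i, z i ^ e i = 0} 0
      = {z : EuclideanSpace ℂ (Fin n) |
          z ⟨0, by omega⟩ ^ a + z ⟨1, by omega⟩ ^ a = 0} := by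
  have h0n : 0 < n := by omega
  set i0 : Fin n := ⟨0, by omega⟩ with hi0
  set i1 : Fin n := ⟨1, by omega⟩ with hi1
  have he0' : e i0 = a := he0
  have he1' : e i1 = a := he1
  have hx0 : ∀ x : Fin n, x = i0 ↔ (x : ℕ) = 0 :=
    fun x => ⟨fun h => by subst h; rfl, fun h => Fin.ext h⟩
  have hx1 : ∀ x : Fin n, x = i1 ↔ (x : ℕ) = 1 :=
    fun x => ⟨fun h => by subst h; rfl, fun h => Fin.ext h⟩
  have hne : i0 ≠ i1 := by
    intro h
    have h' := (hx1 i0).mp h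
    simp [hi0] at h'
  have hlt2 : ∀ i : Fin n, (i : ℕ) < 2 → i = i0 ∨ i = i1 := by
    intro i hi
    rcases (by omega : (i : ℕ) = 0 ∨ (i : ℕ) = 1) with h | h
    · exact Or.inl ((hx0 i).mpr h)
    · exact Or.inr ((hx1 i).mpr h)
  have hea : ∀ i : Fin n, a ≤ e i := by
    intro i
    rcases lt_or_ge (i : ℕ) 2 with h | h
    · rcases hlt2 i h with h | h <;> subst h <;> simp [he0', he1']
    · exact (he i h).le
  ext v
  simp only [Set.mem_setOf_eq]
  show _ ↔ v i0 ^ a + v i1 ^ a = 0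
  constructor
  · intro hvt
    obtain ⟨c, d, hd0, hd, hcd⟩ := mem_tangentConeAt_iff_exists_seq.mp hvt
    have hcdi : ∀ i : Fin n, Tendsto (fun m => (c m : ℂ) * d m i) atTop (𝓝 (v i)) := by
      intro i
      have hp := ((EuclideanSpace.proj i :
        EuclideanSpace ℂ (Fin n) →L[ℂ] ℂ).continuous.tendsto v).comp hcd
      have heqf : (fun m => (c m : ℂ) * d m i)
          = fun m => (EuclideanSpace.proj i : EuclideanSpace ℂ (Fin n) →L[ℂ] ℂ) (c m • d m) := by
        funext m
        show _ = (c m • d m) i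
        rw [PiLp.smul_apply, Complex.real_smul]
      rw [heqf]
      exact hp
    have hdi : ∀ i : Fin n, Tendsto (fun m => d m i) atTop (𝓝 0) := by
      intro i
      have hp := ((EuclideanSpace.proj i :
        EuclideanSpace ℂ (Fin n) →L[ℂ] ℂ).continuous.tendsto 0).comp hd0
      simpa [Function.comp_def] using hp
    have hmem : ∀ᶠ m in atTop, ∑ i, (d m i) ^ e i = 0 := by
      filter_upwards [hd] with m hm
      rw [zero_add] at hm
      exact hm
    set L : Fin n → ℂ := fun i => if (i : ℕ) < 2 then v i ^ a else 0 with hL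
    have hterm : ∀ i : Fin n,
        Tendsto (fun m => (c m : ℂ) ^ a * (d m i) ^ e i) atTop (𝓝 (L i)) := by
      intro i
      have heqf : (fun m => (c m : ℂ) ^ a * (d m i) ^ e i)
          = fun m => ((c m : ℂ) * d m i) ^ a * (d m i) ^ (e i - a) := by
        funext m
        rw [mul_pow, mul_assoc, ← pow_add]
        congr 2
        have := hea i
        omega
      rw [heqf]
      have h1 := ((hcdi i).pow a).mul ((hdi i).pow (e i - a))
      have hval : v i ^ a * (0 : ℂ) ^ (e i - a) = L i := by
        rcases lt_or_ge (i : ℕ) 2 with h | h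
        · have hei : e i = a := by
            rcases hlt2 i h with hh | hh <;> subst hh <;> simp [he0', he1']
          simp [hL, h, hei, (by omega : (i : ℕ) ≤ 1), (by omega : ¬ 1 < (i : ℕ))]
        · have hk : e i - a ≠ 0 := by have := he i h; omega
          simp [hL, zero_pow hk, not_lt.mpr h]
          exact fun hh => absurd hh (by omega)
      rwa [hval] at h1
    have hsum : Tendsto (fun m => ∑ i, (c m : ℂ) ^ a * (d m i) ^ e i) atTop
        (𝓝 (∑ i, L i)) := tendsto_finset_sum _ fun i _ => hterm i
    have hzero : (fun m => ∑ i, (c m : ℂ) ^ a * (d m i) ^ e i) =ᶠ[atTop]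
        fun _ => (0 : ℂ) := by
      filter_upwards [hmem] with m hm
      rw [← Finset.mul_sum, hm, mul_zero]
    have hLsum : ∑ i, L i = 0 :=
      tendsto_nhds_unique (hsum.congr' hzero) tendsto_const_nhds
    have hLsum' : ∑ i, L i = v i0 ^ a + v i1 ^ a := by
      rw [← Finset.sum_subset (Finset.subset_univ ({i0, i1} : Finset (Fin n)))]
      · rw [Finset.sum_pair hne]
        have h0 : L i0 = v i0 ^ a := by simp [hL, hi0]
        have h1 : L i1 = v i1 ^ a := by simp [hL, hi1]
        rw [h0, h1]
      · intro x _ hx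
        simp only [Finset.mem_insert, Finset.mem_singleton, not_or] at hx
        have hx2 : ¬ (x : ℕ) < 2 := by
          intro h
          rcases hlt2 x h with h | h
          exacts [hx.1 h, hx.2 h]
        simp [hL, hx2]
        exact fun hh => absurd hh (by omega)
    rw [hLsum'] at hLsum
    exact hLsum
  · intro hv
    set T : Finset (Fin n) := Finset.univ.filter (fun i => 2 ≤ (i : ℕ)) with hT
    have hTmem : ∀ i ∈ T, 2 ≤ (i : ℕ) := by
      intro i hi
      simpa [hT] using hi
    have hTi0 : ∀ i ∈ T, i ≠ i0 := by
      intro i hi h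
      have := hTmem i hi
      rw [hx0] at h
      omega
    set r : ℕ → ℂ := fun m => ∑ i ∈ T, ((m : ℂ))⁻¹ ^ (e i - a) * v i ^ e i with hr
    have hminv : Tendsto (fun m : ℕ => ((m : ℂ))⁻¹) atTop (𝓝 0) := by
      rw [tendsto_zero_iff_norm_tendsto_zero]
      have heqf : (fun m : ℕ => ‖((m : ℂ))⁻¹‖) = fun m : ℕ => ((m : ℝ))⁻¹ := by
        funext m; rw [norm_inv, Complex.norm_natCast]
      rw [heqf]
      exact tendsto_inv_atTop_zero.comp tendsto_natCast_atTop_atTop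
    have hrt : Tendsto r atTop (𝓝 0) := by
      rw [hr]
      have h2 : Tendsto (fun m : ℕ => ∑ i ∈ T, ((m : ℂ))⁻¹ ^ (e i - a) * v i ^ e i)
          atTop (𝓝 (∑ i ∈ T, 0)) := by
        apply tendsto_finset_sum
        intro i hi
        have hk : e i - a ≠ 0 := by have := he i (hTmem i hi); omega
        have h3 := (hminv.pow (e i - a)).mul_const (v i ^ e i)
        rwa [zero_pow hk, zero_mul] at h3
      simpa using h2
    have hst : Tendsto (fun m => v i0 ^ a - r m) atTop (𝓝 (v i0 ^ a)) := by
      have h3 := tendsto_const_nhds.sub hrt (f := fun _ : ℕ => v i0 ^ a)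
      simpa using h3
    have ha0 : a ≠ 0 := by omega
    have hre : 0 < (((a : ℕ) : ℂ)⁻¹).re := by
      rw [show ((a : ℕ) : ℂ) = (((a : ℕ) : ℝ) : ℂ) by norm_cast, ← Complex.ofReal_inv,
        Complex.ofReal_re]
      have hap : (0 : ℝ) < (a : ℝ) := by exact_mod_cast (by omega : 0 < a)
      positivity
    obtain ⟨w, hw, hwt⟩ : ∃ w : ℕ → ℂ,
        (∀ m, w m ^ a = v i0 ^ a - r m) ∧ Tendsto w atTop (𝓝 (v i0)) := by
      by_cases h0 : v i0 = 0
      · refine ⟨fun m => (v i0 ^ a - r m) ^ (((a : ℕ) : ℂ)⁻¹),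
          fun m => Complex.cpow_nat_inv_pow _ ha0, ?_⟩
        have hcont : ContinuousAt (fun z : ℂ => z ^ (((a : ℕ) : ℂ)⁻¹)) 0 :=
          Complex.continuousAt_cpow_const_of_re_pos (Or.inl (by simp)) hre
        have hva0 : v i0 ^ a = 0 := by rw [h0]; exact zero_pow ha0
        have hst0 : Tendsto (fun m => v i0 ^ a - r m) atTop (𝓝 0) := by
          simpa [hva0] using hrt.neg
        have h4 := hcont.tendsto.comp hst0
        have hz : (((a : ℕ) : ℂ))⁻¹ ≠ 0 := by
          intro h
          rw [h] at hre
          simp at hre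
        simpa [Function.comp_def, Complex.zero_cpow hz, h0, zero_pow ha0] using h4
      · have hva : v i0 ^ a ≠ 0 := pow_ne_zero _ h0
        refine ⟨fun m => v i0 * ((v i0 ^ a - r m) / v i0 ^ a) ^ (((a : ℕ) : ℂ)⁻¹),
          fun m => ?_, ?_⟩
        · rw [mul_pow, Complex.cpow_nat_inv_pow _ ha0]
          field_simp
        · have hcont : ContinuousAt (fun z : ℂ => z ^ (((a : ℕ) : ℂ)⁻¹)) 1 :=
            Complex.continuousAt_cpow_const_of_re_pos (Or.inl (by norm_num)) hre
          have h1 : Tendsto (fun m => (v i0 ^ a - r m) / v i0 ^ a) atTop (𝓝 1) := by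
            have h5 := hst.div_const (v i0 ^ a)
            rwa [div_self hva] at h5
          have h6 := (hcont.tendsto.comp h1).const_mul (v i0)
          simpa [Complex.one_cpow] using h6
    have hsplit : (Finset.univ : Finset (Fin n)) = insert i0 (insert i1 T) := by
      ext x
      simp only [Finset.mem_univ, true_iff, Finset.mem_insert, hT, Finset.mem_filter,
        hx0, hx1, true_and]
      omega
    have hi1T : i1 ∉ T := by
      intro h
      have := hTmem i1 h
      simp [hi1] at this
    have hi0T : i0 ∉ insert i1 T := by
      simp only [Finset.mem_insert]
      rintro (h | h)
      · exact hne h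
      · have := hTmem i0 h
        simp [hi0] at this
    refine mem_tangentConeAt_iff_exists_seq.mpr ⟨fun m => (m : ℝ),
      fun m => (WithLp.equiv 2 _).symm (fun i => (if i = i0 then w m else v i) / (m : ℂ)),
      ?_, ?_, ?_⟩
    swap
    · filter_upwards [eventually_ge_atTop 1] with m hm
      have hm0 : ((m : ℕ) : ℂ) ≠ 0 := Nat.cast_ne_zero.mpr (by omega)
      have key : ∑ i : Fin n, ((if i = i0 then w m else v i) / (m : ℂ)) ^ e i = 0 := by
        rw [hsplit, Finset.sum_insert hi0T, Finset.sum_insert hi1T]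
        have hrest : ∑ i ∈ T, ((if i = i0 then w m else v i) / (m : ℂ)) ^ e i
            = r m / (m : ℂ) ^ a := by
          simp only [hr]
          rw [Finset.sum_div]
          apply Finset.sum_congr rfl
          intro i hi
          rw [if_neg (hTi0 i hi)]
          have h7 : ((m : ℂ))⁻¹ ^ (e i - a) * v i ^ e i / (m : ℂ) ^ a
              = v i ^ e i * (((m : ℂ))⁻¹ ^ (e i - a) * ((m : ℂ))⁻¹ ^ a) := by
            rw [div_eq_mul_inv, ← inv_pow]
            ring
          rw [h7, ← pow_add, Nat.sub_add_cancel (hea i), div_pow, div_eq_mul_inv,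
            ← inv_pow]
        rw [hrest, if_pos rfl, if_neg (Ne.symm hne), he0', he1', div_pow, div_pow,
          hw m]
        have h8 : (v i0 ^ a - r m) / (m : ℂ) ^ a + (v i1 ^ a / (m : ℂ) ^ a
            + r m / (m : ℂ) ^ a) = (v i0 ^ a + v i1 ^ a) / (m : ℂ) ^ a := by
          ring
        rw [h8, hv, zero_div]
      rw [zero_add]
      exact key
    · have hpi : Tendsto (fun m => (fun i => (if i = i0 then w m else v i) / (m : ℂ))) atTop
          (𝓝 (fun _ => 0)) := tendsto_pi_nhds.mpr fun i => by
        have hwi : Tendsto (fun m => if i = i0 then w m else v i) atTop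
            (𝓝 (if i = i0 then v i0 else v i)) := by
          split_ifs
          · exact hwt
          · exact tendsto_const_nhds
        simpa [div_eq_mul_inv] using hwi.mul hminv
      have hq := ((PiLp.continuous_toLp 2 _).tendsto _).comp hpi
      rw [show (0 : EuclideanSpace ℂ (Fin n)) = WithLp.toLp 2 (fun _ => 0) from rfl]
      exact hq
    · have hu : Tendsto (fun m => v + (w m - v i0) • EuclideanSpace.single i0 (1 : ℂ))
          atTop (𝓝 v) := by
        have h1 : Tendsto (fun m => w m - v i0) atTop (𝓝 0) := by
          simpa using hwt.sub (tendsto_const_nhds (x := v i0))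
        have h2 := (tendsto_const_nhds (x := v)).add
          (h1.smul_const (EuclideanSpace.single i0 (1 : ℂ)))
        simpa using h2
      apply hu.congr'
      filter_upwards [eventually_ge_atTop 1] with m hm
      have hm0 : ((m : ℕ) : ℂ) ≠ 0 := Nat.cast_ne_zero.mpr (by omega)
      apply (WithLp.equiv 2 _).injective
      funext i
      show v i + (w m - v i0) • (EuclideanSpace.single i0 (1 : ℂ)) i
          = (m : ℝ) • ((if i = i0 then w m else v i) / (m : ℂ))
      rw [EuclideanSpace.single_apply, Complex.real_smul]
      push_cast
      by_cases hii : i = i0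
      · subst hii
        rw [if_pos rfl, if_pos rfl, mul_div_cancel₀ _ hm0]
        simp
      · rw [if_neg hii, if_neg hii, mul_div_cancel₀ _ hm0]
        simp
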